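/- For q > 0, h > 0, the zeros of F(z) = z + q − q·e^{−zh} in the open upper half-plane all satisfy Re z < 0 and Im z·h ∈ ⋃_{k≥0}(π + 2πk, 2π + 2πk); moreover, every zero z_j satisfies |z_j + q| = q·e^{−h·Re z_j}. -/

import Mathlib

lemma sin_neg_loc {x : ℝ} (hx : 0 < x) (hs : Real.sin x < 0) :
    ∃ k : ℕ, x ∈ Set.Ioo (Real.pi + 2 * Real.pi * k) (2 * Real.pi + 2 * Real.pi * k) := by
  have hπ := Real.pi_pos
  have h2π : 0 < 2 * Real.pi := by linarith
  set n : ℤ := ⌊x / (2 * Real.pi)⌋ with hn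
  have hn0 : 0 ≤ n := Int.floor_nonneg.2 (le_of_lt (div_pos hx h2π))
  have hlo : (n : ℝ) * (2 * Real.pi) ≤ x := by
    have h1 := Int.floor_le (x / (2 * Real.pi))
    calc (n:ℝ) * (2*Real.pi) ≤ (x / (2*Real.pi)) * (2 * Real.pi) :=
          mul_le_mul_of_nonneg_right h1 h2π.le
      _ = x := div_mul_cancel₀ x h2π.ne'
  have hhi : x < ((n:ℝ) + 1) * (2 * Real.pi) := by
    have h1 := Int.lt_floor_add_one (x / (2 * Real.pi))
    calc x = (x / (2*Real.pi)) * (2*Real.pi) := (div_mul_cancel₀ x h2π.ne').symm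
      _ < ((n:ℝ)+1) * (2*Real.pi) := mul_lt_mul_of_pos_right h1 h2π
  set y := x - n * (2 * Real.pi) with hy
  have hy0 : 0 ≤ y := by simp [hy]; linarith
  have hsy : Real.sin y = Real.sin x := by
    have h1 := Real.sin_add_int_mul_two_pi y n
    have : y + n * (2 * Real.pi) = x := by ring
    rw [this] at h1
    exact h1.symm
  have hyπ : Real.pi < y := by
    by_contra hle
    push_neg at hle
    have := Real.sin_nonneg_of_nonneg_of_le_pi hy0 hle
    rw [hsy] at this; linarith
  refine ⟨n.toNat, ?_, ?_⟩ <;>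
    rw [show ((n.toNat : ℕ) : ℝ) = (n : ℝ) by
      rw [← Int.cast_natCast, Int.toNat_of_nonneg hn0]]
  · simp only [hy] at hyπ; linarith
  · nlinarith
  
theorem char_zeros_location (q h : ℝ) (hq : 0 < q) (hh : 0 < h) :
    (∀ z : ℂ, z + q - q * Complex.exp (-z * h) = 0 → 0 < z.im →
        z.re < 0 ∧ Real.sin (h * z.im) < 0 ∧
          ∃ k : ℕ, z.im * h ∈ Set.Ioo (Real.pi + 2 * Real.pi * k) (2 * Real.pi + 2 * Real.pi * k)) ∧
      ∀ z : ℂ, z + q - q * Complex.exp (-z * h) = 0 →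
        ‖z + q‖ = q * Real.exp (-h * z.re) := by
  have habs : ∀ z : ℂ, z + q - q * Complex.exp (-z * h) = 0 →
      ‖z + q‖ = q * Real.exp (-h * z.re) := by
    intro z hz
    have heq : z + q = q * Complex.exp (-z * h) := by linear_combination hz
    rw [heq, norm_mul, Complex.norm_exp]
    rw [Complex.norm_real, Real.norm_eq_abs, abs_of_pos hq]
    congr 1
    simp [Complex.neg_re, Complex.mul_re]
    ring
  refine ⟨?_, habs⟩
  intro z hz him
  have heq : z + q = q * Complex.exp (-z * h) := by linear_combination hz
  -- imaginary part
  have hexpim : (Complex.exp (-z * (h:ℂ))).im = -(Real.exp (-(z.re * h)) * Real.sin (z.im * h)) := by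
    rw [Complex.exp_im]
    simp [Complex.neg_re, Complex.neg_im, Complex.mul_re, Complex.mul_im, Real.sin_neg]
  have h2 := congrArg Complex.im heq
  rw [Complex.add_im, Complex.mul_im, hexpim] at h2
  simp only [Complex.ofReal_im, Complex.ofReal_re, add_zero, zero_mul, mul_zero] at h2
  have hsin : Real.sin (h * z.im) < 0 := by
    have hexp : 0 < Real.exp (-(z.re * h)) := Real.exp_pos _
    rw [show h * z.im = z.im * h by ring]
    by_contra hge
    push_neg at hge
    rw [mul_neg] at h2
    have h3 : 0 ≤ q * (Real.exp (-(z.re * h)) * Real.sin (z.im * h)) :=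
      mul_nonneg hq.le (mul_nonneg hexp.le hge)
    linarith
  -- real part
  have hre : z.re < 0 := by
    have habs' := habs z hz
    by_contra hle
    push_neg at hle
    have h1 : Real.exp (-h * z.re) ≤ 1 := Real.exp_le_one_iff.2 (by nlinarith)
    have h2 : ‖z + q‖ ≤ q := by rw [habs']; nlinarith
    have h3 : ‖z + q‖^2 = (z.re + q)^2 + z.im^2 := by
      rw [Complex.sq_norm, Complex.normSq_apply]
      simp [Complex.add_re, Complex.add_im]
      ring
    nlinarith [norm_nonneg (z + q)]
  exact ⟨hre, hsin, sin_neg_loc (by positivity) (by rwa [mul_comm] at hsin)⟩
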